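/- arXiv:1705.04315 — 5 statements merged into one kernel-verified Lean document; each statement's English description precedes it below -/
import Mathlib

section
/- Let A = (a_{ijklpq}) ∈ T_{6,3} be paired symmetric. Then A has at least one M-eigenvalue, i.e., there exist λ ∈ ℝ and x, y, z ∈ ℝ³ forming an M-eigenpair of A. Moreover, if λ ∈ ℝ is any M-eigenvalue of A with eigenvectors x, y, z, then λ = A x²y²z². -/
open scoped BigOperators

/-- A sixth order three dimensional tensor. -/
abbrev Tensor6 := Fin 3 → Fin 3 → Fin 3 → Fin 3 → Fin 3 → Fin 3 → ℝ

/-- The homogeneous polynomial `A x²y²z²`. -/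
def hexForm (A : Tensor6) (x y z : Fin 3 → ℝ) : ℝ :=
  ∑ i, ∑ j, ∑ k, ∑ l, ∑ p, ∑ q,
    A i j k l p q * x i * x j * y k * y l * z p * z q

/-- `A` is paired symmetric. -/
def PairedSym6 (A : Tensor6) : Prop :=
  ∀ i j k l p q : Fin 3,
    A i j k l p q = A j i k l p q ∧
    A i j k l p q = A i j l k p q ∧
    A i j k l p q = A i j k l q p

/-- `lam` is an M-eigenvalue of `A` with eigenvectors `x, y, z`. -/
def MEig6 (A : Tensor6) (lam : ℝ) (x y z : Fin 3 → ℝ) : Prop :=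
  (∑ i, x i * x i) = 1 ∧ (∑ i, y i * y i) = 1 ∧ (∑ i, z i * z i) = 1 ∧
  (∀ i, (∑ j, ∑ k, ∑ l, ∑ p, ∑ q,
      A i j k l p q * x j * y k * y l * z p * z q) = lam * x i) ∧
  (∀ k, (∑ i, ∑ j, ∑ l, ∑ p, ∑ q,
      A i j k l p q * x i * x j * y l * z p * z q) = lam * y k) ∧
  (∀ p, (∑ i, ∑ j, ∑ k, ∑ l, ∑ q,
      A i j k l p q * x i * x j * y k * y l * z q) = lam * z p)

/-! ### Auxiliary material -/

/-- quadratic/bilinear form of a 3x3 matrix -/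
def qf (M : Fin 3 → Fin 3 → ℝ) (u v : Fin 3 → ℝ) : ℝ :=
  ∑ i, ∑ j, M i j * u i * v j

lemma comm3 (G : Fin 3 → Fin 3 → Fin 3 → ℝ) :
    ∑ i, ∑ j, ∑ l, G i j l = ∑ l, ∑ i, ∑ j, G i j l := by
  rw [show (∑ i, ∑ j, ∑ l, G i j l) = ∑ i, ∑ l, ∑ j, G i j l from
    Finset.sum_congr rfl fun i _ => Finset.sum_comm]
  exact Finset.sum_comm

lemma comm4 (G : Fin 3 → Fin 3 → Fin 3 → Fin 3 → ℝ) :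
    ∑ a, ∑ b, ∑ c, ∑ d, G a b c d = ∑ d, ∑ a, ∑ b, ∑ c, G a b c d := by
  rw [show (∑ a, ∑ b, ∑ c, ∑ d, G a b c d) = ∑ a, ∑ d, ∑ b, ∑ c, G a b c d from
    Finset.sum_congr rfl fun a _ => comm3 _]
  exact Finset.sum_comm

lemma comm5 (G : Fin 3 → Fin 3 → Fin 3 → Fin 3 → Fin 3 → ℝ) :
    ∑ a, ∑ b, ∑ c, ∑ d, ∑ e, G a b c d e = ∑ e, ∑ a, ∑ b, ∑ c, ∑ d, G a b c d e := by
  rw [show (∑ a, ∑ b, ∑ c, ∑ d, ∑ e, G a b c d e)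
      = ∑ a, ∑ e, ∑ b, ∑ c, ∑ d, G a b c d e from
    Finset.sum_congr rfl fun a _ => comm4 _]
  exact Finset.sum_comm

lemma qf_symm (M : Fin 3 → Fin 3 → ℝ) (hsym : ∀ i j, M i j = M j i) (u v : Fin 3 → ℝ) :
    qf M u v = qf M v u := by
  unfold qf
  rw [Finset.sum_comm]
  exact Finset.sum_congr rfl fun j _ => Finset.sum_congr rfl fun i _ => by
    rw [hsym i j]; ring

lemma qf_smul (M : Fin 3 → Fin 3 → ℝ) (c : ℝ) (u : Fin 3 → ℝ) :
    qf M (fun i => c * u i) (fun i => c * u i) = c ^ 2 * qf M u u := by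
  unfold qf
  simp only [Finset.mul_sum]
  exact Finset.sum_congr rfl fun i _ => Finset.sum_congr rfl fun j _ => by ring

lemma qf_add (M : Fin 3 → Fin 3 → ℝ) (x v : Fin 3 → ℝ) (t : ℝ) :
    qf M (fun i => x i + t * v i) (fun i => x i + t * v i)
      = qf M x x + t * qf M x v + t * qf M v x + t ^ 2 * qf M v v := by
  unfold qf
  simp only [Finset.mul_sum, ← Finset.sum_add_distrib]
  exact Finset.sum_congr rfl fun i _ => Finset.sum_congr rfl fun j _ => by ring

/-- A maximizer of a symmetric quadratic form on the unit sphere is an eigenvector. -/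
lemma eigen_of_max (M : Fin 3 → Fin 3 → ℝ) (hsym : ∀ i j, M i j = M j i)
    (x : Fin 3 → ℝ) (hx : (∑ i, x i * x i) = 1)
    (hmax : ∀ u : Fin 3 → ℝ, (∑ i, u i * u i) = 1 → qf M u u ≤ qf M x x) :
    ∀ i, (∑ j, M i j * x j) = qf M x x * x i := by
  set lam := qf M x x with hlam
  set N : Fin 3 → Fin 3 → ℝ := fun i j => (if i = j then lam else 0) - M i j with hN
  have hNsym : ∀ i j, N i j = N j i := by
    intro i j
    simp only [hN, hsym i j]
    congr 1
    by_cases h : i = j <;> simp [h, eq_comm]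
  have hqfN : ∀ u v, qf N u v = lam * (∑ i, u i * v i) - qf M u v := by
    intro u v
    simp only [qf, hN, sub_mul, ite_mul, zero_mul, Finset.sum_sub_distrib,
      Finset.sum_ite_eq, Finset.mem_univ, if_true, Finset.mul_sum]
    ring_nf
  -- positivity of N
  have hpsd : ∀ u, 0 ≤ qf N u u := by
    intro u
    set s := ∑ i, u i * u i with hs
    have hs0 : 0 ≤ s := Finset.sum_nonneg fun i _ => mul_self_nonneg (u i)
    rcases eq_or_lt_of_le hs0 with h0 | hpos
    · -- s = 0, so u = 0
      have hz : ∀ i, u i = 0 := by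
        intro i
        have := (Finset.sum_eq_zero_iff_of_nonneg
          (fun i _ => mul_self_nonneg (u i))).mp h0.symm i (Finset.mem_univ i)
        exact mul_self_eq_zero.mp this
      have h1 : qf M u u = 0 := Finset.sum_eq_zero fun i _ =>
        Finset.sum_eq_zero fun j _ => by rw [hz i]; ring
      rw [hqfN, ← hs, ← h0, h1]; norm_num
    · set r := Real.sqrt s with hr
      have hrpos : 0 < r := Real.sqrt_pos.mpr hpos
      have hr2 : r * r = s := Real.mul_self_sqrt hs0
      set u' : Fin 3 → ℝ := fun i => (1 / r) * u i with hu'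
      have hsum : (∑ i, u' i * u' i) = 1 := by
        have : (∑ i, u' i * u' i) = (1 / (r * r)) * s := by
          rw [hs, Finset.mul_sum]
          exact Finset.sum_congr rfl fun i _ => by simp only [hu']; ring
        rw [this, hr2]
        field_simp
      have hq := hmax u' hsum
      have hq2 : qf M u' u' = (1 / (r * r)) * qf M u u := by
        rw [show qf M u' u' = (1/r)^2 * qf M u u from qf_smul M (1/r) u]
        ring
      rw [hq2, hr2] at hq
      rw [one_div, inv_mul_le_iff₀ hpos] at hq
      rw [hqfN, ← hs]
      nlinarith [hq]
  have hx0 : qf N x x = 0 := by rw [hqfN, hx, hlam]; ring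
  have key : ∀ (t : ℝ) (v : Fin 3 → ℝ), 0 ≤ 2 * t * qf N x v + t ^ 2 * qf N v v := by
    intro t v
    have h := hpsd (fun i => x i + t * v i)
    rw [qf_add, hx0, qf_symm N hNsym v x] at h
    linarith
  have azero : ∀ v, qf N x v = 0 := by
    intro v
    set a := qf N x v with ha
    set b := qf N v v with hb
    have hb0 : 0 ≤ b := hpsd v
    have hb1 : (0:ℝ) < b + 1 := by linarith
    set c := a / (b + 1) with hc
    have hac : a = c * (b + 1) := by rw [hc, div_mul_cancel₀ a hb1.ne']
    have h := key (-c) v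
    rw [← ha, ← hb, hac] at h
    have hc2 : c ^ 2 ≤ 0 := by nlinarith [h, hb1]
    have hc0 : c = 0 := by
      have : c ^ 2 = 0 := le_antisymm hc2 (sq_nonneg c)
      exact (pow_eq_zero_iff two_ne_zero).mp this
    rw [hac, hc0]; ring
  intro i0
  have h := azero (Pi.single i0 1)
  have hcalc : qf N x (Pi.single i0 1) = ∑ i, N i i0 * x i := by
    unfold qf
    refine Finset.sum_congr rfl fun i _ => ?_
    simp [Pi.single_apply, mul_ite]
  rw [hcalc] at h
  have h2 : (∑ i, N i i0 * x i) = lam * x i0 - ∑ j, M i0 j * x j := by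
    simp only [hN]
    rw [show (∑ i, ((if i = i0 then lam else 0) - M i i0) * x i)
        = (∑ i, (if i = i0 then lam * x i else 0)) - ∑ i, M i i0 * x i from ?_]
    · rw [Finset.sum_ite_eq' Finset.univ i0 (fun i => lam * x i)]
      simp only [Finset.mem_univ, if_true]
      congr 1
      exact Finset.sum_congr rfl fun i _ => by rw [hsym i0 i]
    · rw [← Finset.sum_sub_distrib]
      exact Finset.sum_congr rfl fun i _ => by by_cases hi : i = i0 <;> simp [hi] <;> ring
  rw [h2] at h
  linarith

/-! ### The three slice matrices -/

def Bmat (A : Tensor6) (y z : Fin 3 → ℝ) (i j : Fin 3) : ℝ :=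
  ∑ k, ∑ l, ∑ p, ∑ q, A i j k l p q * y k * y l * z p * z q
def Cmat (A : Tensor6) (x z : Fin 3 → ℝ) (k l : Fin 3) : ℝ :=
  ∑ i, ∑ j, ∑ p, ∑ q, A i j k l p q * x i * x j * z p * z q
def Dmat (A : Tensor6) (x y : Fin 3 → ℝ) (p q : Fin 3) : ℝ :=
  ∑ i, ∑ j, ∑ k, ∑ l, A i j k l p q * x i * x j * y k * y l

lemma hexB (A : Tensor6) (x y z : Fin 3 → ℝ) :
    hexForm A x y z = qf (Bmat A y z) x x := by
  unfold hexForm qf Bmat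
  simp only [Finset.sum_mul]
  exact Finset.sum_congr rfl fun i _ => Finset.sum_congr rfl fun j _ =>
    Finset.sum_congr rfl fun k _ => Finset.sum_congr rfl fun l _ =>
    Finset.sum_congr rfl fun p _ => Finset.sum_congr rfl fun q _ => by ring

lemma hexC (A : Tensor6) (x y z : Fin 3 → ℝ) :
    hexForm A x y z = qf (Cmat A x z) y y := by
  unfold hexForm qf Cmat
  rw [show (∑ i, ∑ j, ∑ k, ∑ l, ∑ p, ∑ q,
      A i j k l p q * x i * x j * y k * y l * z p * z q)
      = ∑ k, ∑ l, ∑ i, ∑ j, ∑ p, ∑ q,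
      A i j k l p q * x i * x j * y k * y l * z p * z q from ?_]
  · simp only [Finset.sum_mul]
    exact Finset.sum_congr rfl fun k _ => Finset.sum_congr rfl fun l _ =>
      Finset.sum_congr rfl fun i _ => Finset.sum_congr rfl fun j _ =>
      Finset.sum_congr rfl fun p _ => Finset.sum_congr rfl fun q _ => by ring
  · rw [comm3 (fun i j k => ∑ l, ∑ p, ∑ q, A i j k l p q * x i * x j * y k * y l * z p * z q)]
    exact Finset.sum_congr rfl fun k _ =>
      comm3 (fun i j l => ∑ p, ∑ q, A i j k l p q * x i * x j * y k * y l * z p * z q)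

lemma hexD (A : Tensor6) (x y z : Fin 3 → ℝ) :
    hexForm A x y z = qf (Dmat A x y) z z := by
  unfold hexForm qf Dmat
  rw [show (∑ i, ∑ j, ∑ k, ∑ l, ∑ p, ∑ q,
      A i j k l p q * x i * x j * y k * y l * z p * z q)
      = ∑ p, ∑ q, ∑ i, ∑ j, ∑ k, ∑ l,
      A i j k l p q * x i * x j * y k * y l * z p * z q from ?_]
  · simp only [Finset.sum_mul]
  · rw [comm5 (fun i j k l p => ∑ q, A i j k l p q * x i * x j * y k * y l * z p * z q)]
    exact Finset.sum_congr rfl fun p _ =>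
      comm5 (fun i j k l q => A i j k l p q * x i * x j * y k * y l * z p * z q)

/-- pulling out `x i` from `hexForm`. -/
lemma hex_pullx (A : Tensor6) (x y z : Fin 3 → ℝ) :
    hexForm A x y z = ∑ i, (∑ j, ∑ k, ∑ l, ∑ p, ∑ q,
      A i j k l p q * x j * y k * y l * z p * z q) * x i := by
  unfold hexForm
  simp only [Finset.sum_mul]
  exact Finset.sum_congr rfl fun i _ => Finset.sum_congr rfl fun j _ =>
    Finset.sum_congr rfl fun k _ => Finset.sum_congr rfl fun l _ =>
    Finset.sum_congr rfl fun p _ => Finset.sum_congr rfl fun q _ => by ring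

set_option maxHeartbeats 2000000 in
theorem stmt_3 (A : Tensor6) (hA : PairedSym6 A) :
    (∃ (lam : ℝ) (x y z : Fin 3 → ℝ), MEig6 A lam x y z) ∧
    (∀ (lam : ℝ) (x y z : Fin 3 → ℝ), MEig6 A lam x y z → lam = hexForm A x y z) := by
  constructor
  · -- existence
    set S : Set (Fin 3 → ℝ) := {v : Fin 3 → ℝ | (∑ i, v i * v i) = 1} with hS
    have hScpt : IsCompact S := by
      apply Metric.isCompact_of_isClosed_isBounded
      · exact isClosed_eq (by fun_prop) continuous_const
      · rw [Metric.isBounded_iff_subset_closedBall 0]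
        refine ⟨1, fun v hv => ?_⟩
        simp only [Metric.mem_closedBall, dist_zero_right]
        rw [pi_norm_le_iff_of_nonneg zero_le_one]
        intro i
        have h1 : v i * v i ≤ 1 := by
          rw [← hv]
          exact Finset.single_le_sum (fun j _ => mul_self_nonneg (v j)) (Finset.mem_univ i)
        rw [Real.norm_eq_abs]
        nlinarith [abs_nonneg (v i), sq_abs (v i)]
    set K : Set ((Fin 3 → ℝ) × (Fin 3 → ℝ) × (Fin 3 → ℝ)) := S ×ˢ (S ×ˢ S) with hK
    have hKcpt : IsCompact K := hScpt.prod (hScpt.prod hScpt)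
    have hKne : K.Nonempty := by
      refine ⟨((fun i => if i = 0 then 1 else 0), (fun i => if i = 0 then 1 else 0),
        (fun i => if i = 0 then 1 else 0)), ?_⟩
      have he : (fun i => if i = 0 then 1 else 0 : Fin 3 → ℝ) ∈ S := by
        simp [hS, Fin.sum_univ_three]
      exact ⟨he, he, he⟩
    have hf : Continuous
        (fun w : (Fin 3 → ℝ) × (Fin 3 → ℝ) × (Fin 3 → ℝ) => hexForm A w.1 w.2.1 w.2.2) := by
      unfold hexForm
      fun_prop
    obtain ⟨w, hwK, hwmax⟩ := hKcpt.exists_isMaxOn hKne hf.continuousOn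
    obtain ⟨x, y, z⟩ := w
    obtain ⟨hx, hy, hz⟩ := hwK
    set lam := hexForm A x y z with hlam
    -- x equation
    have hBsym : ∀ i j, Bmat A y z i j = Bmat A y z j i := by
      intro i j
      exact Finset.sum_congr rfl fun k _ => Finset.sum_congr rfl fun l _ =>
        Finset.sum_congr rfl fun p _ => Finset.sum_congr rfl fun q _ => by
          rw [(hA i j k l p q).1]
    have hCsym : ∀ k l, Cmat A x z k l = Cmat A x z l k := by
      intro k l
      exact Finset.sum_congr rfl fun i _ => Finset.sum_congr rfl fun j _ =>
        Finset.sum_congr rfl fun p _ => Finset.sum_congr rfl fun q _ => by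
          rw [(hA i j k l p q).2.1]
    have hDsym : ∀ p q, Dmat A x y p q = Dmat A x y q p := by
      intro p q
      exact Finset.sum_congr rfl fun i _ => Finset.sum_congr rfl fun j _ =>
        Finset.sum_congr rfl fun k _ => Finset.sum_congr rfl fun l _ => by
          rw [(hA i j k l p q).2.2]
    have hmaxB : ∀ u : Fin 3 → ℝ, (∑ i, u i * u i) = 1 →
        qf (Bmat A y z) u u ≤ qf (Bmat A y z) x x := by
      intro u hu
      rw [← hexB, ← hexB]
      exact isMaxOn_iff.mp hwmax (u, y, z) ⟨hu, hy, hz⟩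
    have hmaxC : ∀ u : Fin 3 → ℝ, (∑ i, u i * u i) = 1 →
        qf (Cmat A x z) u u ≤ qf (Cmat A x z) y y := by
      intro u hu
      rw [← hexC, ← hexC]
      exact isMaxOn_iff.mp hwmax (x, u, z) ⟨hx, hu, hz⟩
    have hmaxD : ∀ u : Fin 3 → ℝ, (∑ i, u i * u i) = 1 →
        qf (Dmat A x y) u u ≤ qf (Dmat A x y) z z := by
      intro u hu
      rw [← hexD, ← hexD]
      exact isMaxOn_iff.mp hwmax (x, y, u) ⟨hx, hy, hu⟩
    have heigB := eigen_of_max (Bmat A y z) hBsym x hx hmaxB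
    have heigC := eigen_of_max (Cmat A x z) hCsym y hy hmaxC
    have heigD := eigen_of_max (Dmat A x y) hDsym z hz hmaxD
    refine ⟨lam, x, y, z, hx, hy, hz, ?_, ?_, ?_⟩
    · intro i
      have h := heigB i
      rw [← hexB, ← hlam] at h
      rw [← h]
      simp only [Bmat, Finset.sum_mul]
      exact Finset.sum_congr rfl fun j _ => Finset.sum_congr rfl fun k _ =>
        Finset.sum_congr rfl fun l _ => Finset.sum_congr rfl fun p _ =>
        Finset.sum_congr rfl fun q _ => by ring
    · intro k
      have h := heigC k
      rw [← hexC, ← hlam] at h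
      rw [← h]
      rw [comm3 (fun i j l => ∑ p, ∑ q, A i j k l p q * x i * x j * y l * z p * z q)]
      simp only [Cmat, Finset.sum_mul]
      exact Finset.sum_congr rfl fun l _ => Finset.sum_congr rfl fun i _ =>
        Finset.sum_congr rfl fun j _ => Finset.sum_congr rfl fun p _ =>
        Finset.sum_congr rfl fun q _ => by ring
    · intro p
      have h := heigD p
      rw [← hexD, ← hlam] at h
      rw [← h]
      rw [comm5 (fun i j k l q => A i j k l p q * x i * x j * y k * y l * z q)]
      simp only [Dmat, Finset.sum_mul]
  · -- uniqueness of the value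
    rintro lam x y z ⟨hx, _, _, he1, _, _⟩
    rw [hex_pullx]
    rw [Finset.sum_congr rfl fun i (_ : i ∈ Finset.univ) => by rw [he1 i]]
    rw [show (∑ i, lam * x i * x i) = lam * ∑ i, x i * x i from by
      rw [Finset.mul_sum]; exact Finset.sum_congr rfl fun i _ => by ring]
    rw [hx, mul_one]
end

section
/- Let A = (a_{ijklpq}) ∈ T_{6,3} be paired symmetric. Suppose λ* is an M-eigenvalue of A whose absolute value is largest among all M-eigenvalues of A (i.e., |λ| ≤ |λ*| for every M-eigenvalue λ of A), and let x*, y*, z* ∈ ℝ³ be eigenvectors of A associated with λ*. Then λ*·(x*)²(y*)²(z*)² is a best rank-one approximation of A: for every λ ∈ ℝ and every x, y, z ∈ ℝ³ with x·x = 1, y·y = 1, z·z = 1, one has ‖A − λ*·(x*)²(y*)²(z*)²‖_HS ≤ ‖A − λ·x²y²z²‖_HS. -/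
open scoped BigOperators

/-- The Hilbert–Schmidt norm of a sixth order tensor. -/
noncomputable def hsNorm6 (T : Tensor6) : ℝ :=
  Real.sqrt (∑ i, ∑ j, ∑ k, ∑ l, ∑ p, ∑ q, (T i j k l p q) ^ 2)

/-- The rank-one tensor `lam · x²y²z²`. -/
def rankOne6 (lam : ℝ) (x y z : Fin 3 → ℝ) : Tensor6 :=
  fun i j k l p q => lam * (x i * x j * y k * y l * z p * z q)

/-! ### Auxiliary lemmas -/

lemma rot3 {M : Type*} [AddCommMonoid M] (g : Fin 3 → Fin 3 → Fin 3 → M) :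
    ∑ e, ∑ a, ∑ b, g e a b = ∑ a, ∑ b, ∑ e, g e a b := by
  rw [Finset.sum_comm]
  exact Finset.sum_congr rfl fun a _ => Finset.sum_comm

lemma rot5 {M : Type*} [AddCommMonoid M] (g : Fin 3 → Fin 3 → Fin 3 → Fin 3 → Fin 3 → M) :
    ∑ e, ∑ a, ∑ b, ∑ c, ∑ d, g e a b c d = ∑ a, ∑ b, ∑ c, ∑ d, ∑ e, g e a b c d := by
  rw [Finset.sum_comm]
  refine Finset.sum_congr rfl fun a _ => ?_
  rw [Finset.sum_comm]
  refine Finset.sum_congr rfl fun b _ => ?_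
  rw [Finset.sum_comm]
  refine Finset.sum_congr rfl fun c _ => ?_
  exact Finset.sum_comm

lemma swap4 {M : Type*} [AddCommMonoid M] (g : Fin 3 → Fin 3 → Fin 3 → Fin 3 → M) :
    ∑ c, ∑ d, ∑ a, ∑ b, g c d a b = ∑ a, ∑ b, ∑ c, ∑ d, g c d a b := by
  refine (Finset.sum_congr rfl fun c _ => rot3 (fun d a b => g c d a b)).trans ?_
  exact rot3 (fun c a b => ∑ d, g c d a b)

lemma swap6 {M : Type*} [AddCommMonoid M]
    (g : Fin 3 → Fin 3 → Fin 3 → Fin 3 → Fin 3 → Fin 3 → M) :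
    ∑ e, ∑ f, ∑ a, ∑ b, ∑ c, ∑ d, g e f a b c d
      = ∑ a, ∑ b, ∑ c, ∑ d, ∑ e, ∑ f, g e f a b c d := by
  refine (Finset.sum_congr rfl fun e _ => rot5 (fun f a b c d => g e f a b c d)).trans ?_
  exact rot5 (fun e a b c d => ∑ f, g e f a b c d)

lemma hex_x (A : Tensor6) (u v w : Fin 3 → ℝ) :
    hexForm A u v w
      = ∑ a, ∑ b, (∑ k, ∑ l, ∑ p, ∑ q, A a b k l p q * v k * v l * w p * w q) * u a * u b := by
  unfold hexForm
  simp only [Finset.sum_mul]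
  exact Finset.sum_congr rfl fun i _ => Finset.sum_congr rfl fun j _ =>
    Finset.sum_congr rfl fun k _ => Finset.sum_congr rfl fun l _ =>
    Finset.sum_congr rfl fun p _ => Finset.sum_congr rfl fun q _ => by ring

lemma hex_y (A : Tensor6) (u v w : Fin 3 → ℝ) :
    hexForm A u v w
      = ∑ a, ∑ b, (∑ i, ∑ j, ∑ p, ∑ q, A i j a b p q * u i * u j * w p * w q) * v a * v b := by
  unfold hexForm
  rw [← swap4 (fun a b i j => ∑ p, ∑ q, A i j a b p q * u i * u j * v a * v b * w p * w q)]
  simp only [Finset.sum_mul]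
  exact Finset.sum_congr rfl fun a _ => Finset.sum_congr rfl fun b _ =>
    Finset.sum_congr rfl fun i _ => Finset.sum_congr rfl fun j _ =>
    Finset.sum_congr rfl fun p _ => Finset.sum_congr rfl fun q _ => by ring

lemma hex_z (A : Tensor6) (u v w : Fin 3 → ℝ) :
    hexForm A u v w
      = ∑ a, ∑ b, (∑ i, ∑ j, ∑ k, ∑ l, A i j k l a b * u i * u j * v k * v l) * w a * w b := by
  unfold hexForm
  rw [← swap6 (fun a b i j k l => A i j k l a b * u i * u j * v k * v l * w a * w b)]
  simp only [Finset.sum_mul]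

lemma row_x (A : Tensor6) (u v w : Fin 3 → ℝ) (i : Fin 3) :
    (∑ b, (∑ k, ∑ l, ∑ p, ∑ q, A i b k l p q * v k * v l * w p * w q) * u b)
      = ∑ j, ∑ k, ∑ l, ∑ p, ∑ q, A i j k l p q * u j * v k * v l * w p * w q := by
  simp only [Finset.sum_mul]
  exact Finset.sum_congr rfl fun j _ =>
    Finset.sum_congr rfl fun k _ => Finset.sum_congr rfl fun l _ =>
    Finset.sum_congr rfl fun p _ => Finset.sum_congr rfl fun q _ => by ring

lemma row_y (A : Tensor6) (u v w : Fin 3 → ℝ) (k : Fin 3) :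
    (∑ b, (∑ i, ∑ j, ∑ p, ∑ q, A i j k b p q * u i * u j * w p * w q) * v b)
      = ∑ i, ∑ j, ∑ l, ∑ p, ∑ q, A i j k l p q * u i * u j * v l * w p * w q := by
  rw [← rot3 (fun l i j => ∑ p, ∑ q, A i j k l p q * u i * u j * v l * w p * w q)]
  simp only [Finset.sum_mul]
  exact Finset.sum_congr rfl fun l _ =>
    Finset.sum_congr rfl fun i _ => Finset.sum_congr rfl fun j _ =>
    Finset.sum_congr rfl fun p _ => Finset.sum_congr rfl fun q _ => by ring

lemma row_z (A : Tensor6) (u v w : Fin 3 → ℝ) (p : Fin 3) :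
    (∑ b, (∑ i, ∑ j, ∑ k, ∑ l, A i j k l p b * u i * u j * v k * v l) * w b)
      = ∑ i, ∑ j, ∑ k, ∑ l, ∑ q, A i j k l p q * u i * u j * v k * v l * w q := by
  rw [← rot5 (fun q i j k l => A i j k l p q * u i * u j * v k * v l * w q)]
  simp only [Finset.sum_mul]

lemma cancel_aux (B C : ℝ) (hC : 0 ≤ C) (key : ∀ t : ℝ, 0 ≤ 2*t*B + t^2*C) : B = 0 := by
  have hC1 : (0:ℝ) < C + 1 := by linarith
  have h := key (-B/(C+1))
  have e : 2*(-B/(C+1))*B + (-B/(C+1))^2*C = -(B^2*(C+2))/(C+1)^2 := by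
    field_simp; ring
  rw [e] at h
  have h2 : 0 ≤ -(B^2*(C+2)) := by
    have := mul_nonneg h (sq_nonneg (C+1))
    rwa [div_mul_cancel₀] at this
    positivity
  have h3 : B^2 = 0 := by nlinarith [sq_nonneg B]
  exact pow_eq_zero_iff two_ne_zero |>.mp h3

lemma quad_eig (M : Fin 3 → Fin 3 → ℝ) (hM : ∀ a b, M a b = M b a)
    (u : Fin 3 → ℝ) (hu : (∑ a, u a * u a) = 1) (mu : ℝ)
    (hmu : (∑ a, ∑ b, M a b * u a * u b) = mu)
    (hub : ∀ x : Fin 3 → ℝ, (∑ a, ∑ b, M a b * x a * x b) ≤ mu * (∑ a, x a * x a)) :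
    ∀ i, (∑ b, M i b * u b) = mu * u i := by
  simp only [Fin.sum_univ_three] at hu hmu
  intro i
  fin_cases i
  · have hC : 0 ≤ mu - M 0 0 := by
      have h := hub (fun a => if a = 0 then 1 else 0)
      norm_num [Fin.sum_univ_three] at h
      linarith
    have key : ∀ t : ℝ,
        0 ≤ 2*t*(mu * u 0 - (M 0 0 * u 0 + M 0 1 * u 1 + M 0 2 * u 2)) + t^2*(mu - M 0 0) := by
      intro t
      have h := hub (fun a => u a + t * (if a = 0 then 1 else 0))
      norm_num [Fin.sum_univ_three, show (2:Fin 3) ≠ 0 from by decide] at h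
      have e : mu * ((u 0 + t) * (u 0 + t) + u 1 * u 1 + u 2 * u 2)
          - (M 0 0 * (u 0 + t) * (u 0 + t) + M 0 1 * (u 0 + t) * u 1 + M 0 2 * (u 0 + t) * u 2
            + (M 1 0 * u 1 * (u 0 + t) + M 1 1 * u 1 * u 1 + M 1 2 * u 1 * u 2)
            + (M 2 0 * u 2 * (u 0 + t) + M 2 1 * u 2 * u 1 + M 2 2 * u 2 * u 2))
          = 2*t*(mu * u 0 - (M 0 0 * u 0 + M 0 1 * u 1 + M 0 2 * u 2)) + t^2*(mu - M 0 0) := by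
        linear_combination mu * hu - hmu + (t * u 1) * hM 0 1 + (t * u 2) * hM 0 2
      linarith [h, e]
    have hB := cancel_aux _ _ hC key
    simp only [Fin.sum_univ_three]
    show M 0 0 * u 0 + M 0 1 * u 1 + M 0 2 * u 2 = mu * u 0
    linarith
  · have hC : 0 ≤ mu - M 1 1 := by
      have h := hub (fun a => if a = 1 then 1 else 0)
      norm_num [Fin.sum_univ_three, Fin.ext_iff] at h
      linarith
    have key : ∀ t : ℝ,
        0 ≤ 2*t*(mu * u 1 - (M 1 0 * u 0 + M 1 1 * u 1 + M 1 2 * u 2)) + t^2*(mu - M 1 1) := by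
      intro t
      have h := hub (fun a => u a + t * (if a = 1 then 1 else 0))
      norm_num [Fin.sum_univ_three, Fin.ext_iff] at h
      have e : mu * (u 0 * u 0 + (u 1 + t) * (u 1 + t) + u 2 * u 2)
          - (M 0 0 * u 0 * u 0 + M 0 1 * u 0 * (u 1 + t) + M 0 2 * u 0 * u 2
            + (M 1 0 * (u 1 + t) * u 0 + M 1 1 * (u 1 + t) * (u 1 + t) + M 1 2 * (u 1 + t) * u 2)
            + (M 2 0 * u 2 * u 0 + M 2 1 * u 2 * (u 1 + t) + M 2 2 * u 2 * u 2))
          = 2*t*(mu * u 1 - (M 1 0 * u 0 + M 1 1 * u 1 + M 1 2 * u 2)) + t^2*(mu - M 1 1) := by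
        linear_combination mu * hu - hmu + (t * u 0) * hM 1 0 + (t * u 2) * hM 1 2
      linarith [h, e]
    have hB := cancel_aux _ _ hC key
    simp only [Fin.sum_univ_three]
    show M 1 0 * u 0 + M 1 1 * u 1 + M 1 2 * u 2 = mu * u 1
    linarith
  · have hC : 0 ≤ mu - M 2 2 := by
      have h := hub (fun a => if a = 2 then 1 else 0)
      norm_num [Fin.sum_univ_three, Fin.ext_iff] at h
      linarith
    have key : ∀ t : ℝ,
        0 ≤ 2*t*(mu * u 2 - (M 2 0 * u 0 + M 2 1 * u 1 + M 2 2 * u 2)) + t^2*(mu - M 2 2) := by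
      intro t
      have h := hub (fun a => u a + t * (if a = 2 then 1 else 0))
      norm_num [Fin.sum_univ_three, Fin.ext_iff] at h
      have e : mu * (u 0 * u 0 + u 1 * u 1 + (u 2 + t) * (u 2 + t))
          - (M 0 0 * u 0 * u 0 + M 0 1 * u 0 * u 1 + M 0 2 * u 0 * (u 2 + t)
            + (M 1 0 * u 1 * u 0 + M 1 1 * u 1 * u 1 + M 1 2 * u 1 * (u 2 + t))
            + (M 2 0 * (u 2 + t) * u 0 + M 2 1 * (u 2 + t) * u 1 + M 2 2 * (u 2 + t) * (u 2 + t)))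
          = 2*t*(mu * u 2 - (M 2 0 * u 0 + M 2 1 * u 1 + M 2 2 * u 2)) + t^2*(mu - M 2 2) := by
        linear_combination mu * hu - hmu + (t * u 0) * hM 2 0 + (t * u 1) * hM 2 1
      linarith [h, e]
    have hB := cancel_aux _ _ hC key
    simp only [Fin.sum_univ_three]
    show M 2 0 * u 0 + M 2 1 * u 1 + M 2 2 * u 2 = mu * u 2
    linarith

lemma hom_sq (M : Fin 3 → Fin 3 → ℝ) (mu : ℝ)
    (hmax : ∀ x : Fin 3 → ℝ, (∑ a, x a * x a) = 1 →
      (∑ a, ∑ b, M a b * x a * x b)^2 ≤ mu^2) :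
    ∀ x : Fin 3 → ℝ, (∑ a, ∑ b, M a b * x a * x b)^2 ≤ mu^2 * ((∑ a, x a * x a))^2 := by
  intro x
  rcases eq_or_ne (∑ a, x a * x a) 0 with h0 | h0
  · have hx : ∀ a ∈ Finset.univ, x a * x a = 0 :=
      fun a _ => by
        have := (Finset.sum_eq_zero_iff_of_nonneg
          (fun a _ => mul_self_nonneg (x a))).mp h0 a (Finset.mem_univ a)
        exact this
    have hx' : ∀ a : Fin 3, x a = 0 := fun a => mul_self_eq_zero.mp (hx a (Finset.mem_univ a))
    simp [hx', h0]
  · have hnn : 0 ≤ ∑ a, x a * x a := Finset.sum_nonneg fun a _ => mul_self_nonneg _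
    have hpos : 0 < ∑ a, x a * x a := lt_of_le_of_ne hnn (Ne.symm h0)
    set n := ∑ a, x a * x a with hn
    set s := Real.sqrt n with hs
    have hs2 : s * s = n := Real.mul_self_sqrt hpos.le
    have hspos : 0 < s := Real.sqrt_pos.mpr hpos
    have hy : (∑ a, (x a / s) * (x a / s)) = 1 := by
      have : (∑ a, (x a / s) * (x a / s)) = (∑ a, x a * x a) / (s * s) := by
        rw [Finset.sum_div]
        exact Finset.sum_congr rfl fun a _ => by field_simp
      rw [this, hs2, ← hn, div_self h0]
    have hq : (∑ a, ∑ b, M a b * (x a / s) * (x b / s))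
        = (∑ a, ∑ b, M a b * x a * x b) / n := by
      rw [Finset.sum_div]
      refine Finset.sum_congr rfl fun a _ => ?_
      rw [Finset.sum_div]
      refine Finset.sum_congr rfl fun b _ => ?_
      rw [← hs2]; field_simp
    have h := hmax (fun a => x a / s) hy
    rw [hq, div_pow] at h
    have hn2 : (0:ℝ) < n^2 := by positivity
    calc (∑ a, ∑ b, M a b * x a * x b)^2
        = ((∑ a, ∑ b, M a b * x a * x b)^2 / n^2) * n^2 := by field_simp
      _ ≤ mu^2 * n^2 := mul_le_mul_of_nonneg_right h hn2.le

lemma quad_main (M : Fin 3 → Fin 3 → ℝ) (hM : ∀ a b, M a b = M b a)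
    (u : Fin 3 → ℝ) (hu : (∑ a, u a * u a) = 1)
    (hmax : ∀ x : Fin 3 → ℝ, (∑ a, x a * x a) = 1 →
      (∑ a, ∑ b, M a b * x a * x b)^2 ≤ (∑ a, ∑ b, M a b * u a * u b)^2) :
    ∀ i, (∑ b, M i b * u b) = (∑ a, ∑ b, M a b * u a * u b) * u i := by
  set mu := ∑ a, ∑ b, M a b * u a * u b with hmu
  have hsq := hom_sq M mu hmax
  have hnn : ∀ x : Fin 3 → ℝ, 0 ≤ ∑ a, x a * x a :=
    fun x => Finset.sum_nonneg fun a _ => mul_self_nonneg _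
  rcases le_or_gt 0 mu with hsgn | hsgn
  · refine quad_eig M hM u hu mu hmu.symm ?_
    intro x
    have h := hsq x
    nlinarith [h, mul_nonneg hsgn (hnn x), hnn x]
  · have hM' : ∀ a b, (fun a b => -M a b) a b = (fun a b => -M a b) b a := by
      intro a b; simp [hM a b]
    have hmu' : (∑ a, ∑ b, (fun a b => -M a b) a b * u a * u b) = -mu := by
      rw [hmu]
      simp [neg_mul, Finset.sum_neg_distrib]
    have hub' : ∀ x : Fin 3 → ℝ,
        (∑ a, ∑ b, (fun a b => -M a b) a b * x a * x b) ≤ (-mu) * (∑ a, x a * x a) := by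
      intro x
      have hneg : (∑ a, ∑ b, (fun a b => -M a b) a b * x a * x b)
          = -(∑ a, ∑ b, M a b * x a * x b) := by
        simp [neg_mul, Finset.sum_neg_distrib]
      rw [hneg]
      have h := hsq x
      nlinarith [h, mul_nonneg (neg_nonneg.mpr hsgn.le) (hnn x), hnn x]
    intro i
    have h := quad_eig (fun a b => -M a b) hM' u hu (-mu) hmu' hub' i
    have h2 : (∑ b, (fun a b => -M a b) i b * u b) = -(∑ b, M i b * u b) := by
      simp [neg_mul, Finset.sum_neg_distrib]
    rw [h2] at h
    linarith [h]

lemma unitSet_compact : IsCompact {x : Fin 3 → ℝ | (∑ a, x a * x a) = 1} := by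
  have hcont : Continuous fun x : Fin 3 → ℝ => ∑ a, x a * x a :=
    continuous_finset_sum _ fun a _ => (continuous_apply a).mul (continuous_apply a)
  have hclosed : IsClosed {x : Fin 3 → ℝ | (∑ a, x a * x a) = 1} :=
    isClosed_eq hcont continuous_const
  have hbdd : Bornology.IsBounded {x : Fin 3 → ℝ | (∑ a, x a * x a) = 1} := by
    refine (Metric.isBounded_closedBall (x := (0 : Fin 3 → ℝ)) (r := 1)).subset ?_
    intro x hx
    simp only [Set.mem_setOf_eq] at hx
    simp only [Metric.mem_closedBall, dist_zero_right]
    refine (pi_norm_le_iff_of_nonneg zero_le_one).mpr fun a => ?_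
    rw [Real.norm_eq_abs]
    have h1 : x a * x a ≤ 1 := by
      have h := Finset.single_le_sum (f := fun a => x a * x a)
        (fun a _ => mul_self_nonneg (x a)) (Finset.mem_univ a)
      rw [hx] at h
      exact h
    rw [abs_le]; constructor <;> nlinarith
  exact Metric.isCompact_of_isClosed_isBounded hclosed hbdd

lemma hexForm_continuous (A : Tensor6) :
    Continuous (fun pr : (Fin 3 → ℝ) × (Fin 3 → ℝ) × (Fin 3 → ℝ) =>
      hexForm A pr.1 pr.2.1 pr.2.2) := by
  unfold hexForm
  refine continuous_finset_sum _ fun i _ => continuous_finset_sum _ fun j _ =>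
    continuous_finset_sum _ fun k _ => continuous_finset_sum _ fun l _ =>
    continuous_finset_sum _ fun p _ => continuous_finset_sum _ fun q _ => ?_
  exact ((((( continuous_const.mul ((continuous_apply i).comp continuous_fst)).mul
    ((continuous_apply j).comp continuous_fst)).mul
    ((continuous_apply k).comp (continuous_fst.comp continuous_snd))).mul
    ((continuous_apply l).comp (continuous_fst.comp continuous_snd))).mul
    ((continuous_apply p).comp (continuous_snd.comp continuous_snd))).mul
    ((continuous_apply q).comp (continuous_snd.comp continuous_snd))

lemma normsq (A : Tensor6) (lam : ℝ) (x y z : Fin 3 → ℝ)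
    (hx : (∑ i, x i * x i) = 1) (hy : (∑ i, y i * y i) = 1) (hz : (∑ i, z i * z i) = 1) :
    (∑ i, ∑ j, ∑ k, ∑ l, ∑ p, ∑ q, ((A - rankOne6 lam x y z) i j k l p q)^2)
      = (∑ i, ∑ j, ∑ k, ∑ l, ∑ p, ∑ q, (A i j k l p q)^2)
        - 2*lam*hexForm A x y z + lam^2 := by
  have e : ∀ i j k l p q : Fin 3, ((A - rankOne6 lam x y z) i j k l p q)^2
      = (A i j k l p q)^2
        - (2*lam) * (A i j k l p q * x i * x j * y k * y l * z p * z q)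
        + (lam^2 * (x i * x i) * (x j * x j) * (y k * y k) * (y l * y l) * (z p * z p))
            * (z q * z q) := by
    intro i j k l p q
    show (A i j k l p q - lam * (x i * x j * y k * y l * z p * z q))^2 = _
    ring
  simp only [e, Finset.sum_add_distrib, Finset.sum_sub_distrib,
    ← Finset.mul_sum, ← Finset.sum_mul]
  rw [hx, hy, hz]
  unfold hexForm
  ring

set_option maxHeartbeats 1000000 in
theorem stmt_6 (A : Tensor6) (hA : PairedSym6 A)
    (lamStar : ℝ) (xs ys zs : Fin 3 → ℝ)
    (hstar : MEig6 A lamStar xs ys zs)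
    (hmax : ∀ (lam : ℝ) (x y z : Fin 3 → ℝ), MEig6 A lam x y z → |lam| ≤ |lamStar|) :
    ∀ (lam : ℝ) (x y z : Fin 3 → ℝ),
      (∑ i, x i * x i) = 1 → (∑ i, y i * y i) = 1 → (∑ i, z i * z i) = 1 →
      hsNorm6 (A - rankOne6 lamStar xs ys zs) ≤ hsNorm6 (A - rankOne6 lam x y z) := by
  obtain ⟨hxs, hys, hzs, exs, eys, ezs⟩ := hstar
  -- λ* equals the value of the hexForm at its eigenvectors
  have hexStar : hexForm A xs ys zs = lamStar := by
    rw [hex_x A xs ys zs]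
    have key : ∀ a : Fin 3,
        (∑ b, (∑ k, ∑ l, ∑ p, ∑ q, A a b k l p q * ys k * ys l * zs p * zs q) * xs a * xs b)
          = lamStar * (xs a * xs a) := by
      intro a
      have h1 : (∑ b, (∑ k, ∑ l, ∑ p, ∑ q, A a b k l p q * ys k * ys l * zs p * zs q)
            * xs a * xs b)
          = (∑ b, (∑ k, ∑ l, ∑ p, ∑ q, A a b k l p q * ys k * ys l * zs p * zs q) * xs b)
            * xs a := by
        rw [Finset.sum_mul]
        exact Finset.sum_congr rfl fun b _ => by ring
      rw [h1, row_x A xs ys zs a, exs a]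
      ring
    rw [Finset.sum_congr rfl fun a _ => key a, ← Finset.mul_sum, hxs, mul_one]
  -- compact maximization of (hexForm)^2 over the product of unit spheres
  have hKc : IsCompact ({x : Fin 3 → ℝ | (∑ a, x a * x a) = 1} ×ˢ
      ({x : Fin 3 → ℝ | (∑ a, x a * x a) = 1} ×ˢ {x : Fin 3 → ℝ | (∑ a, x a * x a) = 1})) :=
    unitSet_compact.prod (unitSet_compact.prod unitSet_compact)
  have he0 : (∑ a : Fin 3, (if a = 0 then (1:ℝ) else 0) * (if a = 0 then (1:ℝ) else 0)) = 1 := by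
    norm_num [Fin.sum_univ_three]
  obtain ⟨m, hmK, hm⟩ := hKc.exists_isMaxOn
    ⟨((fun a => if a = 0 then 1 else 0), (fun a => if a = 0 then 1 else 0),
      (fun a => if a = 0 then 1 else 0)), he0, he0, he0⟩
    ((hexForm_continuous A).pow 2).continuousOn
  obtain ⟨u, v, w⟩ := m
  have hu1 : (∑ a, u a * u a) = 1 := hmK.1
  have hv1 : (∑ a, v a * v a) = 1 := hmK.2.1
  have hw1 : (∑ a, w a * w a) = 1 := hmK.2.2
  have hm' : ∀ x y z : Fin 3 → ℝ, (∑ a, x a * x a) = 1 → (∑ a, y a * y a) = 1 →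
      (∑ a, z a * z a) = 1 → (hexForm A x y z)^2 ≤ (hexForm A u v w)^2 := by
    intro x y z hx hy hz
    rw [isMaxOn_iff] at hm
    have h := hm (x, y, z) (Set.mem_prod.mpr ⟨hx, Set.mem_prod.mpr ⟨hy, hz⟩⟩)
    simpa using h
  clear hm hmK
  -- the maximizer is an M-eigentriple
  have symx : ∀ a b, (∑ k, ∑ l, ∑ p, ∑ q, A a b k l p q * v k * v l * w p * w q)
      = (∑ k, ∑ l, ∑ p, ∑ q, A b a k l p q * v k * v l * w p * w q) :=
    fun a b => Finset.sum_congr rfl fun k _ => Finset.sum_congr rfl fun l _ =>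
      Finset.sum_congr rfl fun p _ => Finset.sum_congr rfl fun q _ => by
        rw [(hA a b k l p q).1]
  have symy : ∀ a b, (∑ i, ∑ j, ∑ p, ∑ q, A i j a b p q * u i * u j * w p * w q)
      = (∑ i, ∑ j, ∑ p, ∑ q, A i j b a p q * u i * u j * w p * w q) :=
    fun a b => Finset.sum_congr rfl fun i _ => Finset.sum_congr rfl fun j _ =>
      Finset.sum_congr rfl fun p _ => Finset.sum_congr rfl fun q _ => by
        rw [(hA i j a b p q).2.1]
  have symz : ∀ a b, (∑ i, ∑ j, ∑ k, ∑ l, A i j k l a b * u i * u j * v k * v l)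
      = (∑ i, ∑ j, ∑ k, ∑ l, A i j k l b a * u i * u j * v k * v l) :=
    fun a b => Finset.sum_congr rfl fun i _ => Finset.sum_congr rfl fun j _ =>
      Finset.sum_congr rfl fun k _ => Finset.sum_congr rfl fun l _ => by
        rw [(hA i j k l a b).2.2]
  have hmx : ∀ x : Fin 3 → ℝ, (∑ a, x a * x a) = 1 →
      (∑ a, ∑ b, (∑ k, ∑ l, ∑ p, ∑ q, A a b k l p q * v k * v l * w p * w q) * x a * x b)^2
        ≤ (∑ a, ∑ b, (∑ k, ∑ l, ∑ p, ∑ q, A a b k l p q * v k * v l * w p * w q)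
            * u a * u b)^2 := by
    intro x hx1
    rw [← hex_x A x v w, ← hex_x A u v w]
    exact hm' x v w hx1 hv1 hw1
  have hmy : ∀ x : Fin 3 → ℝ, (∑ a, x a * x a) = 1 →
      (∑ a, ∑ b, (∑ i, ∑ j, ∑ p, ∑ q, A i j a b p q * u i * u j * w p * w q) * x a * x b)^2
        ≤ (∑ a, ∑ b, (∑ i, ∑ j, ∑ p, ∑ q, A i j a b p q * u i * u j * w p * w q)
            * v a * v b)^2 := by
    intro x hx1
    rw [← hex_y A u x w, ← hex_y A u v w]
    exact hm' u x w hu1 hx1 hw1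
  have hmz : ∀ x : Fin 3 → ℝ, (∑ a, x a * x a) = 1 →
      (∑ a, ∑ b, (∑ i, ∑ j, ∑ k, ∑ l, A i j k l a b * u i * u j * v k * v l) * x a * x b)^2
        ≤ (∑ a, ∑ b, (∑ i, ∑ j, ∑ k, ∑ l, A i j k l a b * u i * u j * v k * v l)
            * w a * w b)^2 := by
    intro x hx1
    rw [← hex_z A u v x, ← hex_z A u v w]
    exact hm' u v x hu1 hv1 hx1
  have eigx : ∀ i, (∑ b, (∑ k, ∑ l, ∑ p, ∑ q, A i b k l p q * v k * v l * w p * w q) * u b)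
      = (∑ a, ∑ b, (∑ k, ∑ l, ∑ p, ∑ q, A a b k l p q * v k * v l * w p * w q) * u a * u b)
        * u i :=
    quad_main _ symx u hu1 hmx
  have eigy : ∀ i, (∑ b, (∑ a, ∑ c, ∑ p, ∑ q, A a c i b p q * u a * u c * w p * w q) * v b)
      = (∑ a, ∑ b, (∑ i, ∑ j, ∑ p, ∑ q, A i j a b p q * u i * u j * w p * w q) * v a * v b)
        * v i :=
    quad_main _ symy v hv1 hmy
  have eigz : ∀ i, (∑ b, (∑ a, ∑ c, ∑ k, ∑ l, A a c k l i b * u a * u c * v k * v l) * w b)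
      = (∑ a, ∑ b, (∑ i, ∑ j, ∑ k, ∑ l, A i j k l a b * u i * u j * v k * v l) * w a * w b)
        * w i :=
    quad_main _ symz w hw1 hmz
  have hMeig : MEig6 A (hexForm A u v w) u v w := by
    refine ⟨hu1, hv1, hw1, ?_, ?_, ?_⟩
    · intro i
      have h := eigx i
      rw [row_x A u v w i] at h
      rw [h, ← hex_x A u v w]
    · intro k
      have h := eigy k
      rw [row_y A u v w k] at h
      rw [h, ← hex_y A u v w]
    · intro p
      have h := eigz p
      rw [row_z A u v w p] at h
      rw [h, ← hex_z A u v w]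
  have habs : |hexForm A u v w| ≤ |lamStar| := hmax (hexForm A u v w) u v w hMeig
  have hmu2 : (hexForm A u v w)^2 ≤ lamStar^2 := by
    have h2 := mul_self_le_mul_self (abs_nonneg (hexForm A u v w)) habs
    rw [abs_mul_abs_self, abs_mul_abs_self] at h2
    nlinarith [h2]
  -- final comparison
  intro lam x y z hx hy hz
  unfold hsNorm6
  apply Real.sqrt_le_sqrt
  rw [normsq A lamStar xs ys zs hxs hys hzs, normsq A lam x y z hx hy hz, hexStar]
  have hbound : (hexForm A x y z)^2 ≤ lamStar^2 :=
    le_trans (hm' x y z hx hy hz) hmu2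
  nlinarith [sq_nonneg (lam - hexForm A x y z), hbound]
end

section
/- Let A = (a_{ijkl}) ∈ T_{4,3} be paired symmetric. Then A is positive definite (i.e., A x²y² > 0 for all nonzero x, y ∈ ℝ³) if and only if every M-eigenvalue of A is positive. -/
open scoped BigOperators

/-- A fourth order three dimensional tensor. -/
abbrev Tensor4 := Fin 3 → Fin 3 → Fin 3 → Fin 3 → ℝ

/-- The biquadratic form `A x²y²`. -/
def biQuad (A : Tensor4) (x y : Fin 3 → ℝ) : ℝ :=
  ∑ i, ∑ j, ∑ k, ∑ l, A i j k l * x i * x j * y k * y l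

/-- `A` is paired symmetric. -/
def PairedSym4 (A : Tensor4) : Prop :=
  ∀ i j k l : Fin 3,
    A i j k l = A j i k l ∧ A i j k l = A i j l k ∧ A i j k l = A j i l k

/-- `lam` is an M-eigenvalue of `A` with eigenvectors `x, y`. -/
def MEig4 (A : Tensor4) (lam : ℝ) (x y : Fin 3 → ℝ) : Prop :=
  (∑ i, x i * x i) = 1 ∧ (∑ i, y i * y i) = 1 ∧
  (∀ i, (∑ j, ∑ k, ∑ l, A i j k l * x j * y k * y l) = lam * x i) ∧
  (∀ l, (∑ i, ∑ j, ∑ k, A i j k l * x i * x j * y k) = lam * y l)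

lemma aux_quad {a b : ℝ} (h : ∀ t : ℝ, 0 ≤ 2*a*t + b*t^2) : a = 0 := by
  by_contra ha
  set s : ℝ := |b| + 1 with hs
  have hspos : 0 < s := by positivity
  have h1 := h (-(a / s))
  have hkey : 2*a*(-(a/s)) + b*(-(a/s))^2 = a^2/s^2 * (b - 2*s) := by
    field_simp; ring
  rw [hkey] at h1
  have hb : b - 2*s < 0 := by
    have := le_abs_self b
    simp only [hs] at *; linarith
  have ha2 : 0 < a^2/s^2 := by positivity
  nlinarith [mul_neg_of_pos_of_neg ha2 hb]

lemma sumsq_pos {x : Fin 3 → ℝ} (hx : x ≠ 0) : 0 < ∑ i, x i * x i := by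
  have hex : ∃ i, x i ≠ 0 := by
    by_contra h; push_neg at h; exact hx (funext h)
  obtain ⟨i, hi⟩ := hex
  exact Finset.sum_pos' (fun j _ => mul_self_nonneg (x j))
    ⟨i, Finset.mem_univ i, mul_self_pos.mpr hi⟩

lemma exists_unit {x : Fin 3 → ℝ} (hx : x ≠ 0) :
    ∃ c : ℝ, c^2 * (∑ i, x i * x i) = 1 := by
  have hs := sumsq_pos hx
  refine ⟨(Real.sqrt (∑ i, x i * x i))⁻¹, ?_⟩
  rw [inv_pow, Real.sq_sqrt hs.le, inv_mul_cancel₀ hs.ne']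

/-- If a symmetric quadratic form attains its minimum `m` over the unit sphere at `x0`,
then `x0` is an eigenvector of the matrix with eigenvalue `m`. -/
lemma eig_of_min (M : Fin 3 → Fin 3 → ℝ) (hM : ∀ i j, M i j = M j i)
    (m : ℝ) (x0 : Fin 3 → ℝ) (hx0 : (∑ i, x0 i * x0 i) = 1)
    (hmin : ∀ x : Fin 3 → ℝ, (∑ i, x i * x i) = 1 → m ≤ ∑ i, ∑ j, M i j * x i * x j)
    (heq : (∑ i, ∑ j, M i j * x0 i * x0 j) = m) :
    ∀ i, (∑ j, M i j * x0 j) = m * x0 i := by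
  -- Step A: homogenized inequality
  have hAineq : ∀ x : Fin 3 → ℝ, m * (∑ i, x i * x i) ≤ ∑ i, ∑ j, M i j * x i * x j := by
    intro x
    rcases eq_or_ne x 0 with rfl | h0
    · simp
    · have hs := sumsq_pos h0
      obtain ⟨c, hc⟩ := exists_unit h0
      have hunit : (∑ i, (c * x i) * (c * x i)) = 1 := by
        rw [← hc]; simp only [Fin.sum_univ_three]; ring
      have h1 := hmin (fun i => c * x i) hunit
      have hscale : (∑ i, ∑ j, M i j * (c * x i) * (c * x j))
          = c^2 * ∑ i, ∑ j, M i j * x i * x j := by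
        simp only [Fin.sum_univ_three]; ring
      rw [hscale] at h1
      set B := ∑ i, ∑ j, M i j * x i * x j
      set S := ∑ i, x i * x i
      have h2 : m * S ≤ (c^2 * B) * S := mul_le_mul_of_nonneg_right h1 hs.le
      have h3 : (c^2 * B) * S = B := by
        rw [mul_comm (c^2) B, mul_assoc, hc, mul_one]
      linarith
  intro i
  have key : ∀ t : ℝ, 0 ≤ 2*(((∑ j, M i j * x0 j) + (∑ j, M j i * x0 j))/2 - m * x0 i)*t
      + ((M i i) - m)*t^2 := by
    intro t
    have heq' := heq; have hx0' := hx0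
    simp only [Fin.sum_univ_three] at heq' hx0'
    have hx0m : m * (x0 0 * x0 0 + x0 1 * x0 1 + x0 2 * x0 2) = m := by
      rw [hx0', mul_one]
    fin_cases i
    · have h1 := hAineq ![x0 0 + t, x0 1, x0 2]
      simp only [Fin.sum_univ_three, Matrix.cons_val_zero, Matrix.cons_val_one,
        Matrix.head_cons, Matrix.cons_val_two, Matrix.tail_cons,
        Fin.zero_eta, Fin.mk_one, Fin.reduceFinMk] at h1 ⊢
      linarith [h1, heq', hx0m]
    · have h1 := hAineq ![x0 0, x0 1 + t, x0 2]
      simp only [Fin.sum_univ_three, Matrix.cons_val_zero, Matrix.cons_val_one,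
        Matrix.head_cons, Matrix.cons_val_two, Matrix.tail_cons,
        Fin.zero_eta, Fin.mk_one, Fin.reduceFinMk] at h1 ⊢
      linarith [h1, heq', hx0m]
    · have h1 := hAineq ![x0 0, x0 1, x0 2 + t]
      simp only [Fin.sum_univ_three, Matrix.cons_val_zero, Matrix.cons_val_one,
        Matrix.head_cons, Matrix.cons_val_two, Matrix.tail_cons,
        Fin.zero_eta, Fin.mk_one, Fin.reduceFinMk] at h1 ⊢
      linarith [h1, heq', hx0m]
  have ha := aux_quad key
  have hsym : (∑ j, M j i * x0 j) = (∑ j, M i j * x0 j) :=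
    Finset.sum_congr rfl (fun j _ => by rw [hM])
  rw [hsym] at ha
  linarith

theorem stmt_7 (A : Tensor4) (hA : PairedSym4 A) :
    (∀ x y : Fin 3 → ℝ, x ≠ 0 → y ≠ 0 → 0 < biQuad A x y) ↔
    (∀ (lam : ℝ) (x y : Fin 3 → ℝ), MEig4 A lam x y → 0 < lam) := by
  constructor
  · -- positive definite → M-eigenvalues positive
    rintro hpos lam x y ⟨hx, hy, h3, _⟩
    have hxne : x ≠ 0 := by rintro rfl; simp at hx
    have hyne : y ≠ 0 := by rintro rfl; simp at hy
    have hbq : biQuad A x y = lam := by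
      have step1 : biQuad A x y
          = ∑ i, (∑ j, ∑ k, ∑ l, A i j k l * x j * y k * y l) * x i := by
        simp only [biQuad, Fin.sum_univ_three]; ring
      rw [step1,
        show (∑ i, (∑ j, ∑ k, ∑ l, A i j k l * x j * y k * y l) * x i)
            = ∑ i, (lam * x i) * x i from
          Finset.sum_congr rfl (fun i _ => by rw [h3 i]),
        show (∑ i, (lam * x i) * x i) = lam * ∑ i, x i * x i by
          rw [Finset.mul_sum]; exact Finset.sum_congr rfl (fun i _ => by ring),
        hx, mul_one]
    rw [← hbq]
    exact hpos x y hxne hyne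
  · -- M-eigenvalues positive → positive definite
    intro heig x y hxne hyne
    -- the constraint set
    set K : Set ((Fin 3 → ℝ) × (Fin 3 → ℝ)) :=
      {p | (∑ i, p.1 i * p.1 i) = 1 ∧ (∑ i, p.2 i * p.2 i) = 1} with hKdef
    have hKc : IsCompact K := by
      have c1 : Continuous fun p : (Fin 3 → ℝ) × (Fin 3 → ℝ) => ∑ i, p.1 i * p.1 i :=
        continuous_finset_sum _ fun i _ =>
          ((continuous_apply i).comp continuous_fst).mul
            ((continuous_apply i).comp continuous_fst)
      have c2 : Continuous fun p : (Fin 3 → ℝ) × (Fin 3 → ℝ) => ∑ i, p.2 i * p.2 i :=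
        continuous_finset_sum _ fun i _ =>
          ((continuous_apply i).comp continuous_snd).mul
            ((continuous_apply i).comp continuous_snd)
      have hcl : IsClosed K :=
        (isClosed_eq c1 continuous_const).inter (isClosed_eq c2 continuous_const)
      have hbd : Bornology.IsBounded K := by
        apply (Metric.isBounded_closedBall
          (x := (0 : (Fin 3 → ℝ) × (Fin 3 → ℝ))) (r := 1)).subset
        rintro ⟨u, v⟩ ⟨hu1, hv1⟩
        simp only [Metric.mem_closedBall, dist_zero_right]
        rw [Prod.norm_def]
        have key : ∀ z : Fin 3 → ℝ, (∑ i, z i * z i) = 1 → ‖z‖ ≤ 1 := by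
          intro z hz
          rw [pi_norm_le_iff_of_nonneg zero_le_one]
          intro i
          rw [Real.norm_eq_abs, abs_le_one_iff_mul_self_le_one]
          calc z i * z i ≤ ∑ j, z j * z j :=
            Finset.single_le_sum (fun j _ => mul_self_nonneg (z j)) (Finset.mem_univ i)
          _ = 1 := hz
        exact max_le (key u hu1) (key v hv1)
      exact Metric.isCompact_of_isClosed_isBounded hcl hbd
    have hKne : K.Nonempty := by
      refine ⟨(![1,0,0], ![1,0,0]), ?_, ?_⟩ <;> norm_num [Fin.sum_univ_three, Matrix.cons_val_two, Matrix.tail_cons, Matrix.head_cons]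
    have hc : Continuous fun p : (Fin 3 → ℝ) × (Fin 3 → ℝ) => biQuad A p.1 p.2 := by
      unfold biQuad
      refine continuous_finset_sum _ fun i _ => continuous_finset_sum _ fun j _ =>
        continuous_finset_sum _ fun k _ => continuous_finset_sum _ fun l _ => ?_
      exact (((continuous_const.mul ((continuous_apply i).comp continuous_fst)).mul
        ((continuous_apply j).comp continuous_fst)).mul
        ((continuous_apply k).comp continuous_snd)).mul
        ((continuous_apply l).comp continuous_snd)
    obtain ⟨⟨x0, y0⟩, hmem, hminOn⟩ := hKc.exists_isMinOn hKne hc.continuousOn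
    obtain ⟨hx01, hy01⟩ := hmem
    set m := biQuad A x0 y0 with hmdef
    have hminle : ∀ q ∈ K, m ≤ biQuad A q.1 q.2 := fun q hq => isMinOn_iff.mp hminOn q hq
    -- first eigen equation via the quadratic form in x
    have hMsym : ∀ i j, (∑ k, ∑ l, A i j k l * y0 k * y0 l)
        = (∑ k, ∑ l, A j i k l * y0 k * y0 l) :=
      fun i j => Finset.sum_congr rfl fun k _ => Finset.sum_congr rfl fun l _ => by
        rw [(hA i j k l).1]
    have hminM : ∀ x : Fin 3 → ℝ, (∑ i, x i * x i) = 1 →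
        m ≤ ∑ i, ∑ j, (∑ k, ∑ l, A i j k l * y0 k * y0 l) * x i * x j := by
      intro x hx1
      calc m ≤ biQuad A x y0 := hminle (x, y0) ⟨hx1, hy01⟩
      _ = ∑ i, ∑ j, (∑ k, ∑ l, A i j k l * y0 k * y0 l) * x i * x j := by
        simp only [biQuad, Fin.sum_univ_three]; ring
    have heqM : (∑ i, ∑ j, (∑ k, ∑ l, A i j k l * y0 k * y0 l) * x0 i * x0 j) = m := by
      rw [hmdef]; simp only [biQuad, Fin.sum_univ_three]; ring
    have eig1 := eig_of_min (fun i j => ∑ k, ∑ l, A i j k l * y0 k * y0 l) hMsym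
      m x0 hx01 hminM heqM
    have e1 : ∀ i, (∑ j, ∑ k, ∑ l, A i j k l * x0 j * y0 k * y0 l) = m * x0 i := by
      intro i
      rw [← eig1 i]; simp only [Fin.sum_univ_three]; ring
    -- second eigen equation via the quadratic form in y
    have hNsym : ∀ a b, (∑ i, ∑ j, A i j a b * x0 i * x0 j)
        = (∑ i, ∑ j, A i j b a * x0 i * x0 j) :=
      fun a b => Finset.sum_congr rfl fun i _ => Finset.sum_congr rfl fun j _ => by
        rw [(hA i j a b).2.1]
    have hminN : ∀ z : Fin 3 → ℝ, (∑ i, z i * z i) = 1 →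
        m ≤ ∑ a, ∑ b, (∑ i, ∑ j, A i j a b * x0 i * x0 j) * z a * z b := by
      intro z hz1
      calc m ≤ biQuad A x0 z := hminle (x0, z) ⟨hx01, hz1⟩
      _ = ∑ a, ∑ b, (∑ i, ∑ j, A i j a b * x0 i * x0 j) * z a * z b := by
        simp only [biQuad, Fin.sum_univ_three]; ring
    have heqN : (∑ a, ∑ b, (∑ i, ∑ j, A i j a b * x0 i * x0 j) * y0 a * y0 b) = m := by
      rw [hmdef]; simp only [biQuad, Fin.sum_univ_three]; ring
    have eig2 := eig_of_min (fun a b => ∑ i, ∑ j, A i j a b * x0 i * x0 j) hNsym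
      m y0 hy01 hminN heqN
    have e2 : ∀ l, (∑ i, ∑ j, ∑ k, A i j k l * x0 i * x0 j * y0 k) = m * y0 l := by
      intro l
      have hswap : (∑ i, ∑ j, ∑ k, A i j k l * x0 i * x0 j * y0 k)
          = ∑ i, ∑ j, ∑ k, A i j l k * x0 i * x0 j * y0 k :=
        Finset.sum_congr rfl fun i _ => Finset.sum_congr rfl fun j _ =>
          Finset.sum_congr rfl fun k _ => by rw [(hA i j k l).2.1]
      rw [hswap, ← eig2 l]; simp only [Fin.sum_univ_three]; ring
    -- m is a positive M-eigenvalue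
    have hm : 0 < m := heig m x0 y0 ⟨hx01, hy01, e1, e2⟩
    -- scale back to (x, y)
    obtain ⟨cx, hcx⟩ := exists_unit hxne
    obtain ⟨cy, hcy⟩ := exists_unit hyne
    have hu : (∑ i, (cx * x i) * (cx * x i)) = 1 := by
      rw [← hcx]; simp only [Fin.sum_univ_three]; ring
    have hv : (∑ i, (cy * y i) * (cy * y i)) = 1 := by
      rw [← hcy]; simp only [Fin.sum_univ_three]; ring
    have h5 : m ≤ biQuad A (fun i => cx * x i) (fun i => cy * y i) :=
      hminle ((fun i => cx * x i), (fun i => cy * y i)) ⟨hu, hv⟩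
    have hsc : biQuad A (fun i => cx * x i) (fun i => cy * y i)
        = cx^2 * cy^2 * biQuad A x y := by
      simp only [biQuad, Fin.sum_univ_three]; ring
    rw [hsc] at h5
    have h6 : 0 < cx^2 * cy^2 * biQuad A x y := lt_of_lt_of_le hm h5
    by_contra hB
    push_neg at hB
    nlinarith [h6, sq_nonneg (cx*cy), hB]
end

section
/- Let A = (a_{ijkl}) ∈ T_{4,3} be paired symmetric. For i,j ∈ {1,2,3} let A_{ij} denote the 3×3 matrix (a_{ijkl})_{k,l}, and for y ∈ ℝ³ let A(y) be the 3×3 matrix with (i,j) entry yᵀA_{ij}y = Σ_{k,l} a_{ijkl} y_k y_l. Then the biquadratic form A x²y² is positive definite if and only if: the matrix A_{11} is positive definite, and for every nonzero y ∈ ℝ³ both (yᵀA_{11}y)(yᵀA_{22}y) − (yᵀA_{12}y)(yᵀA_{21}y) > 0 and det(A(y)) > 0. -/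
open scoped BigOperators
open scoped Matrix

/-- The matrix `A(y)` with `(i,j)` entry `yᵀ A_{ij} y = Σ_{k,l} a_{ijkl} y_k y_l`. -/
def Amat (A : Tensor4) (y : Fin 3 → ℝ) : Matrix (Fin 3) (Fin 3) ℝ :=
  Matrix.of fun i j => ∑ k, ∑ l, A i j k l * y k * y l

/-- The block sub-matrix `A_{ij} = (a_{ijkl})_{k,l}`. -/
def subMat (A : Tensor4) (i j : Fin 3) : Matrix (Fin 3) (Fin 3) ℝ :=
  Matrix.of fun k l => A i j k l

lemma key_ineq (a b c d e f x y z : ℝ) (ha : 0 < a) (h2 : 0 < a*d - b*b)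
    (h3 : 0 < a*(d*f-e*e) - b*(b*f-c*e) + c*(b*e-c*d))
    (hx : ¬(x = 0 ∧ y = 0 ∧ z = 0)) :
    0 < a*x*x + 2*b*x*y + 2*c*x*z + d*y*y + 2*e*y*z + f*z*z := by
  by_cases hz : z = 0
  · by_cases hy : y = 0
    · have hxx : x ≠ 0 := by tauto
      subst hz hy
      have hx2 : 0 < x * x := mul_self_pos.mpr hxx
      nlinarith
    · subst hz
      have hy2 : 0 < y * y := mul_self_pos.mpr hy
      nlinarith [sq_nonneg (a*x + b*y), mul_pos h2 hy2]
  · have hz2 : 0 < z * z := mul_self_pos.mpr hz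
    nlinarith [mul_pos ha h2, mul_nonneg h2.le (sq_nonneg (a*x + b*y + c*z)),
      sq_nonneg ((a*d-b*b)*y + (a*e-b*c)*z), mul_pos ha (mul_pos h3 hz2)]

lemma biQuad_eq (A : Tensor4) (x y : Fin 3 → ℝ) :
    biQuad A x y = ∑ i, ∑ j, Amat A y i j * x i * x j := by
  simp only [biQuad, Amat, Matrix.of_apply, Fin.sum_univ_three]
  ring

lemma dot_eq (M : Matrix (Fin 3) (Fin 3) ℝ) (x : Fin 3 → ℝ) :
    dotProduct (star x) (M *ᵥ x) = ∑ i, ∑ j, M i j * x i * x j := by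
  simp only [dotProduct, Matrix.mulVec, Fin.sum_univ_three, Pi.star_apply,
    star_trivial, id_eq]
  ring

lemma Amat_symm (A : Tensor4) (hA : PairedSym4 A) (y : Fin 3 → ℝ) (i j : Fin 3) :
    Amat A y i j = Amat A y j i := by
  simp only [Amat, Matrix.of_apply]
  exact Finset.sum_congr rfl fun k _ => Finset.sum_congr rfl fun l _ => by
    rw [(hA i j k l).1]

lemma ne_zero_comp {x : Fin 3 → ℝ} (hx : x ≠ 0) : ¬(x 0 = 0 ∧ x 1 = 0 ∧ x 2 = 0) := by
  rintro ⟨h0, h1, h2⟩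
  exact hx (funext fun i => by fin_cases i <;> assumption)

theorem stmt_9 (A : Tensor4) (hA : PairedSym4 A) :
    (∀ x y : Fin 3 → ℝ, x ≠ 0 → y ≠ 0 → 0 < biQuad A x y) ↔
    ((subMat A 0 0).PosDef ∧
      ∀ y : Fin 3 → ℝ, y ≠ 0 →
        0 < (Amat A y 0 0) * (Amat A y 1 1) - (Amat A y 0 1) * (Amat A y 1 0) ∧
        0 < (Amat A y).det) := by
  have e0ne : (![1,0,0] : Fin 3 → ℝ) ≠ 0 := by
    intro hc; have := congrFun hc 0; simp at this
  have e1ne : (![0,1,0] : Fin 3 → ℝ) ≠ 0 := by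
    intro hc; have := congrFun hc 1; simp at this
  constructor
  · intro h
    constructor
    · refine Matrix.PosDef.of_dotProduct_mulVec_pos ?_ (fun y hy => ?_)
      · ext k l
        simp only [Matrix.conjTranspose_apply, subMat, Matrix.of_apply, star_trivial]
        exact ((hA 0 0 k l).2.1).symm
      · have hb := h ![1,0,0] y e0ne hy
        have heq : dotProduct (star y) (subMat A 0 0 *ᵥ y) = biQuad A ![1,0,0] y := by
          rw [dot_eq, biQuad_eq]
          simp only [subMat, Amat, Matrix.of_apply, Fin.sum_univ_three,
            Matrix.cons_val_zero, Matrix.cons_val_one, Matrix.head_cons,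
            Matrix.cons_val_two, Matrix.tail_cons]
          ring
        rw [heq]; exact hb
    · intro y hy
      set M := Amat A y with hM
      have hdot : ∀ x : Fin 3 → ℝ, dotProduct (star x) (M *ᵥ x) = biQuad A x y := by
        intro x; rw [dot_eq, biQuad_eq]
      have hPD : M.PosDef := by
        refine Matrix.PosDef.of_dotProduct_mulVec_pos ?_ (fun x hx => ?_)
        · ext i j
          simp only [Matrix.conjTranspose_apply, star_trivial]
          exact (Amat_symm A hA y j i)
        · rw [hdot]; exact h x y hx hy
      refine ⟨?_, hPD.det_pos⟩
      have h11 : 0 < M 1 1 := by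
        have hb := h ![0,1,0] y e1ne hy
        have heq : biQuad A ![0,1,0] y = M 1 1 := by
          rw [biQuad_eq]
          simp only [hM, Fin.sum_univ_three, Matrix.cons_val_zero, Matrix.cons_val_one,
            Matrix.head_cons, Matrix.cons_val_two, Matrix.tail_cons]
          ring
        rw [← heq]; exact hb
      have s10 : M 1 0 = M 0 1 := Amat_symm A hA y 1 0
      have xne : (![M 1 1, -(M 0 1), 0] : Fin 3 → ℝ) ≠ 0 := by
        intro hc; have := congrFun hc 0; simp at this; rw [this] at h11; exact lt_irrefl _ h11
      have hb := h ![M 1 1, -(M 0 1), 0] y xne hy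
      rw [biQuad_eq] at hb
      simp only [← hM, Fin.sum_univ_three, Matrix.cons_val_zero, Matrix.cons_val_one,
        Matrix.head_cons, Matrix.cons_val_two, Matrix.tail_cons] at hb
      nlinarith [hb, h11, s10]
  · rintro ⟨h00, hmin⟩ x y hx hy
    obtain ⟨h2, h3⟩ := hmin y hy
    set M := Amat A y with hM
    have s10 : M 1 0 = M 0 1 := Amat_symm A hA y 1 0
    have s20 : M 2 0 = M 0 2 := Amat_symm A hA y 2 0
    have s21 : M 2 1 = M 1 2 := Amat_symm A hA y 2 1
    have ha : 0 < M 0 0 := by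
      have hp := h00.dotProduct_mulVec_pos hy
      have heq : dotProduct (star y) (subMat A 0 0 *ᵥ y) = M 0 0 := by
        rw [dot_eq]
        simp only [hM, subMat, Amat, Matrix.of_apply, Fin.sum_univ_three]
      rwa [heq] at hp
    rw [s10] at h2
    have h3' : 0 < M 0 0 * (M 1 1 * M 2 2 - M 1 2 * M 1 2)
        - M 0 1 * (M 0 1 * M 2 2 - M 0 2 * M 1 2)
        + M 0 2 * (M 0 1 * M 1 2 - M 0 2 * M 1 1) := by
      have hd : M.det = M 0 0 * (M 1 1 * M 2 2 - M 1 2 * M 1 2)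
          - M 0 1 * (M 0 1 * M 2 2 - M 0 2 * M 1 2)
          + M 0 2 * (M 0 1 * M 1 2 - M 0 2 * M 1 1) := by
        rw [Matrix.det_fin_three, s10, s20, s21]; ring
      rwa [hd] at h3
    have hk := key_ineq (M 0 0) (M 0 1) (M 0 2) (M 1 1) (M 1 2) (M 2 2)
      (x 0) (x 1) (x 2) ha h2 h3' (ne_zero_comp hx)
    rw [biQuad_eq]
    simp only [← hM, Fin.sum_univ_three]
    rw [s10, s20, s21]
    linarith [hk]
end

section
/- Let A = (a_{ijkl}) ∈ T_{4,3} be paired symmetric. Then the biquadratic form A x²y² is a sum of squares of bilinear forms if and only if there exists a semi-paired symmetric tensor B = (b_{ijkl}) of A (i.e., b_{ijkl} = b_{jilk}, b_{ijlk} = b_{jikl}, b_{ijkl} + b_{jilk} + b_{ijlk} + b_{jikl} = 4 a_{ijkl} for all i,j,k,l) such that the 9×9 matrix M with entries M_{(i,k),(j,l)} := b_{ijkl}, indexed by pairs in {1,2,3}×{1,2,3}, is positive semidefinite. -/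
open scoped BigOperators

set_option maxHeartbeats 1000000

/-- The biquadratic form of `A` is a sum of squares of bilinear forms. -/
def SOSBilinear (A : Tensor4) : Prop :=
  ∃ (r : ℕ) (α : Fin r → Fin 3 → Fin 3 → ℝ),
    ∀ x y : Fin 3 → ℝ,
      biQuad A x y = ∑ s, (∑ i, ∑ j, α s i j * x i * y j) ^ 2

/-- The 9×9 unfolded matrix of `A`, with entry `M_{(i,k),(j,l)} = a_{ijkl}`. -/
def unfold4 (A : Tensor4) : Matrix (Fin 3 × Fin 3) (Fin 3 × Fin 3) ℝ :=
  Matrix.of fun p q => A p.1 q.1 p.2 q.2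

/-- `B` is a semi-paired symmetric tensor of `A`. -/
def SemiPaired (A B : Tensor4) : Prop :=
  ∀ i j k l : Fin 3,
    B i j k l = B j i l k ∧ B i j l k = B j i k l ∧
    B i j k l + B j i l k + B i j l k + B j i k l = 4 * A i j k l

lemma quad3_zero (M : Fin 3 → Fin 3 → ℝ) (hsym : ∀ i j, M i j = M j i)
    (h : ∀ x : Fin 3 → ℝ, ∑ i, ∑ j, M i j * x i * x j = 0) :
    ∀ i j, M i j = 0 := by
  have e0 := h ![1,0,0]
  have e1 := h ![0,1,0]
  have e2 := h ![0,0,1]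
  have e01 := h ![1,1,0]
  have e02 := h ![1,0,1]
  have e12 := h ![0,1,1]
  simp [Fin.sum_univ_three] at e0 e1 e2 e01 e02 e12
  have s01 := hsym 0 1
  have s02 := hsym 0 2
  have s12 := hsym 1 2
  intro i j
  fin_cases i <;> fin_cases j
  · exact e0
  · show M 0 1 = 0; linarith
  · show M 0 2 = 0; linarith
  · show M 1 0 = 0; linarith
  · exact e1
  · show M 1 2 = 0; linarith
  · show M 2 0 = 0; linarith
  · show M 2 1 = 0; linarith
  · exact e2

lemma biquad_zero (D : Tensor4) (hD : PairedSym4 D)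
    (h : ∀ x y, biQuad D x y = 0) : ∀ i j k l, D i j k l = 0 := by
  have h1 : ∀ y : Fin 3 → ℝ, ∀ i j, (∑ k, ∑ l, D i j k l * y k * y l) = 0 := by
    intro y
    refine quad3_zero (fun i j => ∑ k, ∑ l, D i j k l * y k * y l) ?_ ?_
    · intro i j
      refine Finset.sum_congr rfl fun k _ => Finset.sum_congr rfl fun l _ => ?_
      rw [(hD i j k l).1]
    · intro x
      have := h x y
      simp only [biQuad, Fin.sum_univ_three] at this ⊢
      linarith [this]
  intro i j k l
  refine quad3_zero (fun k l => D i j k l) ?_ (fun y => ?_) k l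
  · intro k l; exact (hD i j k l).2.1
  · exact h1 y i j

lemma biquad_ext (A S : Tensor4) (hA : PairedSym4 A) (hS : PairedSym4 S)
    (h : ∀ x y, biQuad A x y = biQuad S x y) :
    ∀ i j k l, A i j k l = S i j k l := by
  have hz := biquad_zero (fun i j k l => A i j k l - S i j k l) ?_ ?_
  · intro i j k l
    have := hz i j k l
    linarith
  · intro i j k l
    obtain ⟨a1, a2, a3⟩ := hA i j k l
    obtain ⟨b1, b2, b3⟩ := hS i j k l
    refine ⟨by dsimp only; linarith, by dsimp only; linarith, by dsimp only; linarith⟩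
  · intro x y
    have := h x y
    simp only [biQuad, Fin.sum_univ_three] at this ⊢
    linarith [this]

lemma biquad_symmetrize (B : Tensor4) (x y : Fin 3 → ℝ) :
    biQuad (fun i j k l => (B i j k l + B j i l k + B i j l k + B j i k l) / 4) x y
      = biQuad B x y := by
  simp only [biQuad, Fin.sum_univ_three]
  ring

lemma pairedSym_symmetrize (B : Tensor4) :
    PairedSym4 (fun i j k l => (B i j k l + B j i l k + B i j l k + B j i k l) / 4) := by
  intro i j k l
  refine ⟨by dsimp only; ring, by dsimp only; ring, by dsimp only; ring⟩

lemma sos_eq {ι : Type*} [Fintype ι] (α : ι → Fin 3 → Fin 3 → ℝ) (x y : Fin 3 → ℝ) :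
    biQuad (fun i j k l => ∑ s, α s i k * α s j l) x y
      = ∑ s, (∑ i, ∑ j, α s i j * x i * y j) ^ 2 := by
  simp only [biQuad, Fin.sum_univ_three, Finset.sum_mul, ← Finset.sum_add_distrib]
  refine Finset.sum_congr rfl fun s _ => ?_
  ring

theorem stmt_15 (A : Tensor4) (hA : PairedSym4 A) :
    SOSBilinear A ↔
    ∃ B : Tensor4, SemiPaired A B ∧ (unfold4 B).PosSemidef := by
  constructor
  · rintro ⟨r, α, hα⟩
    set B : Tensor4 := fun i j k l => ∑ s, α s i k * α s j l with hB
    have hbq : ∀ x y, biQuad A x y = biQuad B x y := by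
      intro x y
      rw [hα x y, hB, sos_eq]
    have hsym : ∀ i j k l, A i j k l
        = (B i j k l + B j i l k + B i j l k + B j i k l) / 4 := by
      refine biquad_ext A _ hA (pairedSym_symmetrize B) ?_
      intro x y
      rw [biquad_symmetrize, hbq]
    refine ⟨B, ?_, ?_⟩
    · intro i j k l
      have c1 : B i j k l = B j i l k := by
        simp only [hB]
        exact Finset.sum_congr rfl fun s _ => by ring
      have c2 : B i j l k = B j i k l := by
        simp only [hB]
        exact Finset.sum_congr rfl fun s _ => by ring
      exact ⟨c1, c2, by have := hsym i j k l; linarith⟩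
    · have : unfold4 B =
          (Matrix.of fun (s : Fin r) (p : Fin 3 × Fin 3) => α s p.1 p.2).conjTranspose *
          (Matrix.of fun (s : Fin r) (p : Fin 3 × Fin 3) => α s p.1 p.2) := by
        ext p q
        simp [unfold4, Matrix.mul_apply, Matrix.conjTranspose_apply, hB]
      rw [this]
      exact Matrix.posSemidef_conjTranspose_mul_self _
  · rintro ⟨B, hSP, hPSD⟩
    obtain ⟨C, hC⟩ : ∃ C : Matrix (Fin 3 × Fin 3) (Fin 3 × Fin 3) ℝ, unfold4 B = C.conjTranspose * C := by
      classical
      open scoped MatrixOrder in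
      obtain ⟨X, hX, -, hXX⟩ :=
        CFC.exists_sqrt_of_isSelfAdjoint_of_quasispectrumRestricts (a := unfold4 B) hPSD.isHermitian
          (QuasispectrumRestricts.nnreal_of_nonneg hPSD.nonneg)
      exact ⟨X, by rw [← hXX]; exact (congrArg (· * X) hX.symm)⟩
    have hBC : ∀ i j k l, B i j k l = ∑ p : Fin 3 × Fin 3, C p (i, k) * C p (j, l) := by
      intro i j k l
      have := congrFun (congrFun hC (i, k)) (j, l)
      simpa [unfold4, Matrix.mul_apply, Matrix.conjTranspose_apply] using this
    refine ⟨9, fun s i j => C (finProdFinEquiv.symm s) (i, j), fun x y => ?_⟩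
    have hAB : biQuad A x y = biQuad B x y := by
      have hAS : A = fun i j k l => (B i j k l + B j i l k + B i j l k + B j i k l) / 4 := by
        funext i j k l
        have := (hSP i j k l).2.2
        linarith
      rw [hAS, biquad_symmetrize]
    have hBfun : B = fun i j k l => ∑ p : Fin 3 × Fin 3, C p (i, k) * C p (j, l) := by
      funext i j k l; exact hBC i j k l
    calc biQuad A x y = biQuad B x y := hAB
      _ = biQuad (fun i j k l => ∑ p : Fin 3 × Fin 3, C p (i, k) * C p (j, l)) x y := by
            rw [← hBfun]
      _ = ∑ p : Fin 3 × Fin 3, (∑ i, ∑ j, C p (i, j) * x i * y j) ^ 2 :=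
            sos_eq (fun p i j => C p (i, j)) x y
      _ = ∑ s : Fin 9, (∑ i, ∑ j, C (finProdFinEquiv.symm s) (i, j) * x i * y j) ^ 2 :=
            (Equiv.sum_comp finProdFinEquiv.symm
              (fun p => (∑ i, ∑ j, C p (i, j) * x i * y j) ^ 2)).symm
end
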